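/- Let K be a field, A_1,...,A_n nonempty finite subsets of K with d_i = |A_i| and d_i ≤ d_{i+1} for all i, and n ≥ 2. If G ∈ K[t_1,...,t_n] is a nonzero polynomial of total degree d, then the number of zeros of G in A_1 × ... × A_n is at most d_2 ⋯ d_n · d. -/

import Mathlib

open MvPolynomial Finset

lemma root_filter_card {K : Type*} [Field K] [DecidableEq K] (p : Polynomial K) (hp : p ≠ 0)
    (s : Finset K) : (s.filter fun a => p.eval a = 0).card ≤ p.natDegree := by
  have h1 : s.filter (fun a => p.eval a = 0) ⊆ p.roots.toFinset := by
    intro a ha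
    simp only [Finset.mem_filter] at ha
    simp [Multiset.mem_toFinset, Polynomial.mem_roots', hp, ha.2]
  calc _ ≤ p.roots.toFinset.card := Finset.card_le_card h1
    _ ≤ Multiset.card p.roots := p.roots.toFinset_card_le
    _ ≤ p.natDegree := p.card_roots'

lemma prod_filter_pos_succ {n : ℕ} (f : Fin (n+1) → ℕ) :
    ∏ j ∈ Finset.univ.filter (fun j : Fin (n+1) => 0 < (j:ℕ)), f j = ∏ i : Fin n, f i.succ := by
  rw [Finset.prod_filter, Fin.prod_univ_succ]
  simp

lemma key {K : Type*} [Field K] [DecidableEq K] :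
    ∀ (n : ℕ) (A : Fin n → Finset K),
      (∀ i j : Fin n, i ≤ j → (A i).card ≤ (A j).card) →
      ∀ G : MvPolynomial (Fin n) K, G ≠ 0 →
      ((Fintype.piFinset A).filter fun x => MvPolynomial.eval x G = 0).card ≤
        (∏ i ∈ Finset.univ.filter (fun i : Fin n => 0 < (i : ℕ)), (A i).card) * G.totalDegree := by
  intro n
  induction n with
  | zero =>
    intro A _ G hG
    have h0 : ((Fintype.piFinset A).filter fun x => MvPolynomial.eval x G = 0) = ∅ := by
      apply Finset.filter_false_of_mem
      intro x _
      rw [eq_C_of_isEmpty G, eval_C]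
      simpa using fun h => hG (by rw [eq_C_of_isEmpty G, h, map_zero])
    rw [h0]
    simp
  | succ n ih =>
    intro A hmono G hG
    set φ := finSuccEquiv K n G with hφdef
    have hφ0 : φ ≠ 0 := by
      simp only [hφdef, ne_eq, EmbeddingLike.map_eq_zero_iff]
      exact hG
    set m := φ.natDegree with hm
    set Gm := φ.leadingCoeff with hGmdef
    have hGm0 : Gm ≠ 0 := Polynomial.leadingCoeff_ne_zero.mpr hφ0
    have hmd : m ≤ G.totalDegree := by
      rw [hm, hφdef, natDegree_finSuccEquiv]
      exact degreeOf_le_totalDegree G 0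
    have hGmcoeff : Gm = φ.coeff m := (Polynomial.coeff_natDegree).symm
    have hGmdeg : Gm.totalDegree + m ≤ G.totalDegree := by
      rw [hGmcoeff]
      exact totalDegree_coeff_finSuccEquiv_add_le G m (by rw [← hGmcoeff]; exact hGm0)
    set T := Fintype.piFinset (fun i : Fin n => A i.succ) with hT
    set P' := ∏ i ∈ Finset.univ.filter (fun i : Fin n => 0 < (i : ℕ)), (A i.succ).card with hP'
    set P := ∏ i : Fin n, (A i.succ).card with hP
    have hPT : T.card = P := by
      rw [hT, hP, Fintype.card_piFinset]
    have hB : (T.filter fun y => MvPolynomial.eval y Gm = 0).card ≤ P' * Gm.totalDegree :=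
      ih (fun i => A i.succ) (fun i j hij => hmono i.succ j.succ (by simpa using hij)) Gm hGm0
    -- decompose the count
    have hcard : ((Fintype.piFinset A).filter fun x => MvPolynomial.eval x G = 0).card
        = ∑ y ∈ T, ((A 0).filter fun a => MvPolynomial.eval (Fin.cons a y) G = 0).card := by
      rw [Finset.card_eq_sum_card_fiberwise (f := Fin.tail) (t := T)
        (fun x hx => by
          simp only [Finset.mem_coe, Finset.mem_filter, Fintype.mem_piFinset] at hx
          simp only [Finset.mem_coe, hT, Fintype.mem_piFinset]
          intro i; exact hx.1 i.succ)]
      refine Finset.sum_congr rfl fun y hy => ?_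
      refine Finset.card_nbij' (fun x => x 0) (fun a => Fin.cons a y) ?_ ?_ ?_ ?_
      · intro x hx
        simp only [Finset.mem_coe, Finset.mem_filter, Fintype.mem_piFinset] at hx ⊢
        obtain ⟨⟨h1, h2⟩, h3⟩ := hx
        have e : (Fin.cons (x 0) y : Fin (n+1) → K) = x := by
          rw [← h3]; exact Fin.cons_self_tail x
        exact ⟨h1 0, by rw [e]; exact h2⟩
      · intro a ha
        simp only [Finset.mem_coe, Finset.mem_filter, Fintype.mem_piFinset] at ha ⊢
        simp only [hT, Fintype.mem_piFinset] at hy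
        refine ⟨⟨fun i => ?_, ha.2⟩, ?_⟩
        · rcases Fin.eq_zero_or_eq_succ i with rfl | ⟨j, rfl⟩
          · simpa using ha.1
          · simpa using hy j
        · rfl
      · intro x hx
        simp only [Finset.mem_coe, Finset.mem_filter] at hx
        rw [← hx.2]
        exact Fin.cons_self_tail x
      · intro a _
        rfl
    rw [hcard]
    -- bound each fiber
    have hbound : ∀ y ∈ T, ((A 0).filter fun a => MvPolynomial.eval (Fin.cons a y) G = 0).card
        ≤ if MvPolynomial.eval y Gm = 0 then (A 0).card else m := by
      intro y _
      split_ifs with hy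
      · exact Finset.card_filter_le _ _
      · have hq : Polynomial.map (MvPolynomial.eval y) φ ≠ 0 := by
          intro h
          apply hy
          have h2 := congrArg (fun p : Polynomial K => p.coeff m) h
          simp only [Polynomial.coeff_map, Polynomial.coeff_zero] at h2
          rwa [hGmcoeff]
        calc ((A 0).filter fun a => MvPolynomial.eval (Fin.cons a y) G = 0).card
            = ((A 0).filter fun a =>
                (Polynomial.map (MvPolynomial.eval y) φ).eval a = 0).card := by
              congr 1
              exact Finset.filter_congr fun a _ => by rw [eval_eq_eval_mv_eval']
          _ ≤ (Polynomial.map (MvPolynomial.eval y) φ).natDegree := root_filter_card _ hq _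
          _ ≤ m := Polynomial.natDegree_map_le
    calc ∑ y ∈ T, ((A 0).filter fun a => MvPolynomial.eval (Fin.cons a y) G = 0).card
        ≤ ∑ y ∈ T, (if MvPolynomial.eval y Gm = 0 then (A 0).card else m) :=
          Finset.sum_le_sum hbound
      _ ≤ (T.filter fun y => MvPolynomial.eval y Gm = 0).card * (A 0).card + T.card * m := by
          rw [Finset.sum_ite, Finset.sum_const, Finset.sum_const, smul_eq_mul, smul_eq_mul]
          gcongr
          exact Finset.filter_subset _ _
      _ ≤ P' * Gm.totalDegree * (A 0).card + P * m := by
          rw [hPT]; gcongr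
      _ ≤ P * Gm.totalDegree + P * m := by
          gcongr ?_ + _
          rcases Nat.eq_zero_or_pos Gm.totalDegree with h0 | hpos
          · simp [h0]
          · cases n with
            | zero =>
              exfalso
              rw [eq_C_of_isEmpty Gm, totalDegree_C] at hpos
              exact Nat.lt_irrefl 0 hpos
            | succ k =>
              have hA01 : (A 0).card ≤ (A 1).card := hmono 0 1 (Fin.zero_le _)
              have hPsplit : P = (A 1).card * P' := by
                rw [hP, Fin.prod_univ_succ, hP',
                  prod_filter_pos_succ (fun i : Fin (k+1) => (A i.succ).card)]
                rfl
              calc P' * Gm.totalDegree * (A 0).card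
                  = (A 0).card * P' * Gm.totalDegree := by ring
                _ ≤ (A 1).card * P' * Gm.totalDegree := by gcongr
                _ = P * Gm.totalDegree := by rw [hPsplit]
      _ = P * (Gm.totalDegree + m) := by ring
      _ ≤ P * G.totalDegree := by gcongr
      _ = (∏ i ∈ Finset.univ.filter (fun i : Fin (n+1) => 0 < (i : ℕ)), (A i).card)
            * G.totalDegree := by
          rw [prod_filter_pos_succ (fun i : Fin (n+1) => (A i).card), hP]

theorem stmt_3 {K : Type*} [Field K] [DecidableEq K] (n : ℕ) (hn : 2 ≤ n)
    (A : Fin n → Finset K) (hA : ∀ i, (A i).Nonempty)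
    (hmono : ∀ i j : Fin n, i ≤ j → (A i).card ≤ (A j).card)
    (G : MvPolynomial (Fin n) K) (hG : G ≠ 0) :
    ((Fintype.piFinset A).filter fun x => MvPolynomial.eval x G = 0).card ≤
      (∏ i ∈ Finset.univ.filter (fun i : Fin n => 0 < (i : ℕ)), (A i).card) * G.totalDegree := by
  exact key n A hmono G hG
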